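/- Let φ be an alternating p-form of comass one on a finite-dimensional real inner product space V, and for v, w ∈ V let v∘w be the symmetric endomorphism of V given by (v∘w)(u) = ½(⟨w,u⟩ v + ⟨v,u⟩ w). Then for every φ-plane ξ = (e₁,…,e_p) ∈ G(φ), λ_φ(v∘w)(e₁,…,e_p) = ⟨P_ξ v, P_ξ w⟩, where P_ξ is the orthogonal projection onto span{e₁,…,e_p}. (Lemma B.2) -/

import Mathlib

open scoped RealInnerProductSpace

noncomputable section

variable {V : Type*} [NormedAddCommGroup V] [InnerProductSpace ℝ V] [FiniteDimensional ℝ V]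

/-- `λ_φ(A)`, the action of the endomorphism `A` on the alternating `p`-form `φ` as a
derivation: `λ_φ(A)(v₁,…,v_p) = Σ_k φ(v₁,…,A v_k,…,v_p)`. -/
def lambdaForm {p : ℕ} (φ : V [⋀^Fin p]→ₗ[ℝ] ℝ) (A : V →ₗ[ℝ] V) (v : Fin p → V) : ℝ :=
  ∑ k, φ (Function.update v k (A (v k)))

/-- The symmetric endomorphism `v ∘ w` of `V`, `(v∘w)(u) = ½(⟨w,u⟩ v + ⟨v,u⟩ w)`. -/
def symProd (v w : V) : V →ₗ[ℝ] V :=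
  ((1 : ℝ) / 2) • ((innerₛₗ ℝ w).smulRight v + (innerₛₗ ℝ v).smulRight w)

/-- The orthogonal projection of `V` onto `span{e₁,…,e_p}`, as a map `V → V`. -/
def projSpan {p : ℕ} (e : Fin p → V) (v : V) : V :=
  (Submodule.orthogonalProjection (Submodule.span ℝ (Set.range e)) v : V)

lemma projSpan_eq_sum {p : ℕ} {e : Fin p → V} (he : Orthonormal ℝ e) (v : V) :
    projSpan e v = ∑ i, ⟪e i, v⟫ • e i := by
  rw [projSpan, ← Submodule.starProjection_apply]
  apply Submodule.eq_starProjection_of_mem_of_inner_eq_zero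
  · exact Submodule.sum_mem _ fun i _ =>
      Submodule.smul_mem _ _ (Submodule.subset_span ⟨i, rfl⟩)
  · intro w hw
    have hee : ∀ i j : Fin p, ⟪e i, e j⟫ = if i = j then (1:ℝ) else 0 :=
      orthonormal_iff_ite.mp he
    induction hw using Submodule.span_induction with
    | mem x hx =>
      obtain ⟨j, rfl⟩ := hx
      rw [inner_sub_left, sum_inner]
      have : ∀ i, ⟪(⟪e i, v⟫ : ℝ) • e i, e j⟫ = if i = j then ⟪e j, v⟫ else 0 := by
        intro i
        rw [real_inner_smul_left, hee]
        rcases eq_or_ne i j with rfl | h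
        · simp
        · simp [h]
      simp only [this, Finset.sum_ite_eq', Finset.mem_univ, if_true]
      rw [real_inner_comm]
      ring
    | zero => simp
    | add x y _ _ hx hy =>
      rw [inner_sub_left] at hx hy ⊢
      rw [inner_add_right, inner_add_right]
      linarith
    | smul c x _ hx =>
      rw [inner_sub_left, sub_eq_zero] at hx ⊢
      rw [real_inner_smul_right, real_inner_smul_right, hx]

lemma phi_update_orth_unit {p : ℕ} (φ : V [⋀^Fin p]→ₗ[ℝ] ℝ)
    (hcomass : ∀ e : Fin p → V, Orthonormal ℝ e → φ e ≤ 1)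
    {e : Fin p → V} (he : Orthonormal ℝ e) (heφ : φ e = 1)
    (k : Fin p) {u : V} (hu : ∀ i, ⟪e i, u⟫ = 0) (hu1 : ‖u‖ = 1) :
    φ (Function.update e k u) = 0 := by
  set c : ℝ := φ (Function.update e k u) with hc
  set t : ℝ := Real.arctan c with ht
  set f : Fin p → V := Function.update e k (Real.cos t • e k + Real.sin t • u) with hf
  have hee : ∀ i j : Fin p, ⟪e i, e j⟫ = if i = j then (1:ℝ) else 0 :=
    orthonormal_iff_ite.mp he
  have huu : ⟪u, u⟫ = (1:ℝ) := by
    rw [real_inner_self_eq_norm_sq, hu1]; norm_num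
  have huj : ∀ i, ⟪u, e i⟫ = (0:ℝ) := fun i => by
    rw [real_inner_comm]; exact hu i
  have hfon : Orthonormal ℝ f := by
    rw [orthonormal_iff_ite]
    intro i j
    rcases eq_or_ne i k with rfl | hik
    · rcases eq_or_ne j i with rfl | hji
      · simp only [hf, Function.update_self, if_true]
        simp only [inner_add_left, inner_add_right, real_inner_smul_left,
          real_inner_smul_right, hee, huu, hu, huj, if_true]
        nlinarith [Real.sin_sq_add_cos_sq t]
      · simp only [hf, Function.update_self, Function.update_of_ne hji, hji, if_false]
        simp only [inner_add_left, real_inner_smul_left, hee, huj]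
        simp [Ne.symm hji]
    · rcases eq_or_ne j k with rfl | hjk
      · simp only [hf, Function.update_self, Function.update_of_ne hik, hik, if_false]
        simp only [inner_add_right, real_inner_smul_right, hee, hu]
        simp [hik]
      · simp only [hf, Function.update_of_ne hik, Function.update_of_ne hjk]
        rw [hee]
  have hval : φ f = Real.cos t + Real.sin t * c := by
    rw [hf, φ.map_update_add, φ.map_update_smul, φ.map_update_smul,
      Function.update_eq_self, heφ, ← hc]
    simp [smul_eq_mul]
  have hle := hcomass f hfon
  rw [hval, ht, Real.cos_arctan, Real.sin_arctan] at hle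
  have h0 : (0:ℝ) < Real.sqrt (1 + c ^ 2) := Real.sqrt_pos.mpr (by positivity)
  have hsq : Real.sqrt (1 + c ^ 2) ^ 2 = 1 + c ^ 2 :=
    Real.sq_sqrt (by positivity)
  have key : 1 + c ^ 2 ≤ Real.sqrt (1 + c ^ 2) := by
    have h2 := mul_le_mul_of_nonneg_right hle h0.le
    have h3 : (1 / Real.sqrt (1 + c ^ 2) + c / Real.sqrt (1 + c ^ 2) * c)
        * Real.sqrt (1 + c ^ 2) = 1 + c ^ 2 := by
      field_simp
    rw [h3, one_mul] at h2
    exact h2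
  have hc2 : c ^ 2 = 0 := le_antisymm (by nlinarith [key, hsq, h0]) (sq_nonneg c)
  exact sq_eq_zero_iff.mp hc2

lemma phi_update_orth {p : ℕ} (φ : V [⋀^Fin p]→ₗ[ℝ] ℝ)
    (hcomass : ∀ e : Fin p → V, Orthonormal ℝ e → φ e ≤ 1)
    {e : Fin p → V} (he : Orthonormal ℝ e) (heφ : φ e = 1)
    (k : Fin p) {u : V} (hu : ∀ i, ⟪e i, u⟫ = 0) :
    φ (Function.update e k u) = 0 := by
  rcases eq_or_ne u 0 with rfl | hne
  · exact φ.map_update_zero e k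
  · have hn : ‖u‖ ≠ 0 := norm_ne_zero_iff.mpr hne
    have : u = ‖u‖ • (‖u‖⁻¹ • u) := by rw [smul_smul, mul_inv_cancel₀ hn, one_smul]
    rw [this, φ.map_update_smul, phi_update_orth_unit φ hcomass he heφ k
      (fun i => by rw [real_inner_smul_right, hu, mul_zero])
      (by rw [norm_smul, norm_inv, norm_norm, inv_mul_cancel₀ hn]), smul_zero]

lemma phi_update_eq {p : ℕ} (φ : V [⋀^Fin p]→ₗ[ℝ] ℝ)
    (hcomass : ∀ e : Fin p → V, Orthonormal ℝ e → φ e ≤ 1)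
    {e : Fin p → V} (he : Orthonormal ℝ e) (heφ : φ e = 1)
    (k : Fin p) (x : V) :
    φ (Function.update e k x) = ⟪e k, x⟫ := by
  have hee : ∀ i j : Fin p, ⟪e i, e j⟫ = if i = j then (1:ℝ) else 0 :=
    orthonormal_iff_ite.mp he
  have hdecomp : x = (∑ i, ⟪e i, x⟫ • e i) + (x - ∑ i, ⟪e i, x⟫ • e i) := by abel
  have hperp : ∀ j, ⟪e j, x - ∑ i, ⟪e i, x⟫ • e i⟫ = 0 := by
    intro j
    rw [inner_sub_right, inner_sum]
    have : ∀ i, ⟪e j, (⟪e i, x⟫ : ℝ) • e i⟫ = if i = j then ⟪e j, x⟫ else 0 := by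
      intro i
      rw [real_inner_smul_right, hee]
      rcases eq_or_ne i j with rfl | h
      · simp
      · simp [h, Ne.symm h]
    simp only [this, Finset.sum_ite_eq', Finset.mem_univ, if_true, sub_self]
  calc φ (Function.update e k x)
      = φ (Function.update e k (∑ i, ⟪e i, x⟫ • e i))
        + φ (Function.update e k (x - ∑ i, ⟪e i, x⟫ • e i)) := by
        rw [← φ.map_update_add, ← hdecomp]
    _ = φ (Function.update e k (∑ i, ⟪e i, x⟫ • e i)) := by
        rw [phi_update_orth φ hcomass he heφ k hperp, add_zero]
    _ = ∑ i, ⟪e i, x⟫ * φ (Function.update e k (e i)) := by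
        rw [φ.map_update_sum]
        simp_rw [φ.map_update_smul, smul_eq_mul]
    _ = ⟪e k, x⟫ := by
        have : ∀ i, ⟪e i, x⟫ * φ (Function.update e k (e i))
            = if i = k then ⟪e k, x⟫ else 0 := by
          intro i
          rcases eq_or_ne i k with rfl | h
          · rw [Function.update_eq_self, heφ, mul_one, if_pos rfl]
          · rw [if_neg h, φ.map_eq_zero_of_eq _ (i := i) (j := k)
              (by rw [Function.update_of_ne h, Function.update_self]) h, mul_zero]
        simp only [this, Finset.sum_ite_eq', Finset.mem_univ, if_true]

/-- Lemma B.2: for a comass-one `p`-form `φ` and a `φ`-plane `ξ = (e₁,…,e_p)`,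
`λ_φ(v∘w)(ξ) = ⟨P_ξ v, P_ξ w⟩` where `P_ξ` is the orthogonal projection onto
`span{e₁,…,e_p}`. -/
theorem lambdaForm_symProd_eq_inner_proj {p : ℕ} (hp : 1 ≤ p)
    (φ : V [⋀^Fin p]→ₗ[ℝ] ℝ)
    (hcomass : ∀ e : Fin p → V, Orthonormal ℝ e → φ e ≤ 1)
    (v w : V) (e : Fin p → V) (he : Orthonormal ℝ e) (heφ : φ e = 1) :
    lambdaForm φ (symProd v w) e = ⟪projSpan e v, projSpan e w⟫ := by
  have hee : ∀ i j : Fin p, ⟪e i, e j⟫ = if i = j then (1:ℝ) else 0 :=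
    orthonormal_iff_ite.mp he
  have hA : ∀ k, (symProd v w) (e k)
      = ((1:ℝ)/2) • ((⟪w, e k⟫ : ℝ) • v + (⟪v, e k⟫ : ℝ) • w) := by
    intro k
    simp [symProd]
  have hterm : ∀ k : Fin p, φ (Function.update e k ((symProd v w) (e k)))
      = ⟪e k, v⟫ * ⟪e k, w⟫ := by
    intro k
    rw [phi_update_eq φ hcomass he heφ, hA, real_inner_smul_right,
      inner_add_right, real_inner_smul_right, real_inner_smul_right,
      real_inner_comm v (e k), real_inner_comm w (e k)]
    ring
  have hrhs : ⟪projSpan e v, projSpan e w⟫ = ∑ k, ⟪e k, v⟫ * ⟪e k, w⟫ := by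
    rw [projSpan_eq_sum he, projSpan_eq_sum he, sum_inner]
    refine Finset.sum_congr rfl fun i _ => ?_
    rw [inner_sum]
    have : ∀ j, ⟪(⟪e i, v⟫ : ℝ) • e i, (⟪e j, w⟫ : ℝ) • e j⟫
        = if j = i then ⟪e i, v⟫ * ⟪e i, w⟫ else 0 := by
      intro j
      rw [real_inner_smul_left, real_inner_smul_right, hee]
      rcases eq_or_ne j i with rfl | h
      · simp [mul_comm]
      · simp [h, Ne.symm h]
    simp only [this, Finset.sum_ite_eq', Finset.mem_univ, if_true]
  rw [hrhs, lambdaForm]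
  exact Finset.sum_congr rfl fun k _ => hterm k
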